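/- Let n ≥ 3 be an integer, m = n − 1, and suppose 1/(2m) < ρ < 1/(m+1). Then there is no solution (x, y) of the system (S_ρ) on all of ℝ such that x′(t) < 0 and 0 < x(t) < 1 for every t ∈ ℝ and (x(t), y(t)) → (1, 0) as t → −∞. -/

import Mathlib

/-- `IsEinsteinSystemSol m ρ x y` means the pair of differentiable functions `(x, y)` solves
the planar system `(S_ρ)`:
`(1 − 2mρ)·x′ = (m−1)(1−mρ)(1 − x²) − x·y` and
`(1 − 2mρ)·y′ = −m(m−1)(1−(m+1)ρ)(1 − x²) + (1 + m − 4mρ)·x·y`,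
arising from rotationally symmetric gradient steady ρ-Einstein solitons. -/
def IsEinsteinSystemSol (m ρ : ℝ) (x y : ℝ → ℝ) : Prop :=
  Differentiable ℝ x ∧ Differentiable ℝ y ∧
    (∀ t : ℝ, (1 - 2 * m * ρ) * deriv x t =
      (m - 1) * (1 - m * ρ) * (1 - x t ^ 2) - x t * y t) ∧
    (∀ t : ℝ, (1 - 2 * m * ρ) * deriv y t =
      -(m * (m - 1) * (1 - (m + 1) * ρ) * (1 - x t ^ 2)) + (1 + m - 4 * m * ρ) * x t * y t)

/-- Case 4 of Theorem 4.2: for `1/(2m) < ρ < 1/(m+1)` there is no global trajectory of the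
system `(S_ρ)` with `x′ < 0`, `0 < x < 1` emanating from the equilibrium `(1,0)` at `t = -∞`. -/
theorem no_steady_soliton_trajectory_case4 (n : ℕ) (hn : 3 ≤ n) (m ρ : ℝ)
    (hm : m = (n : ℝ) - 1) (hρ1 : 1 / (2 * m) < ρ) (hρ2 : ρ < 1 / (m + 1)) :
    ¬ ∃ x y : ℝ → ℝ, IsEinsteinSystemSol m ρ x y ∧
      (∀ t : ℝ, deriv x t < 0) ∧ (∀ t : ℝ, 0 < x t ∧ x t < 1) ∧
      Filter.Tendsto (fun t => (x t, y t)) Filter.atBot (nhds (1, 0)) := by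
  rintro ⟨x, y, ⟨hdx, hdy, hx', hy'⟩, hxd, hbox, hlim⟩
  have hm2 : (2:ℝ) ≤ m := by
    have h3 : (3:ℝ) ≤ (n:ℝ) := by exact_mod_cast hn
    rw [hm]; linarith
  have hmpos : (0:ℝ) < m := by linarith
  -- N < 0
  have hN : 1 - 2 * m * ρ < 0 := by
    have h := (div_lt_iff₀ (by positivity : (0:ℝ) < 2 * m)).mp hρ1
    linarith
  -- (m+1)ρ < 1
  have hρm1 : (m + 1) * ρ < 1 := by
    have h := (lt_div_iff₀ (by positivity : (0:ℝ) < m + 1)).mp hρ2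
    linarith
  -- k > 0
  have hkpos : 0 < 1 + m - 4 * m * ρ := by
    have h4 : 4 * m * ((m + 1) * ρ) < 4 * m * 1 :=
      mul_lt_mul_of_pos_left hρm1 (by positivity)
    nlinarith [sq_nonneg (m - 1)]
  have hxpos : ∀ t, 0 < x t := fun t => (hbox t).1
  have hxlt : ∀ t, x t < 1 := fun t => (hbox t).2
  have h1x2 : ∀ t, 0 < 1 - x t ^ 2 := by
    intro t; nlinarith [hxpos t, hxlt t]
  -- y' > 0 wherever y < 0
  have hy'pos : ∀ t, y t < 0 → 0 < deriv y t := by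
    intro t hyt
    have hB : 0 < m * (m - 1) * (1 - (m + 1) * ρ) :=
      mul_pos (mul_pos hmpos (by linarith)) (by linarith)
    have hxy : (1 + m - 4 * m * ρ) * x t * y t < 0 :=
      mul_neg_of_pos_of_neg (mul_pos hkpos (hxpos t)) hyt
    have hmd : (1 - 2 * m * ρ) * deriv y t < 0 := by
      rw [hy' t]; nlinarith [h1x2 t]
    by_contra hle
    push_neg at hle
    have h0 : 0 ≤ (1 - 2 * m * ρ) * deriv y t := by
      have := mul_nonneg (neg_nonneg.mpr hN.le) (neg_nonneg.mpr hle)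
      nlinarith
    linarith
  -- y tends to 0 at -∞
  have hylim : Filter.Tendsto y Filter.atBot (nhds 0) := by
    have h := (continuous_snd.tendsto ((1:ℝ), (0:ℝ))).comp hlim
    exact h
  -- y ≥ 0 everywhere
  have hynn : ∀ t, 0 ≤ y t := by
    by_contra hcon
    push_neg at hcon
    obtain ⟨t0, ht0⟩ := hcon
    by_cases hS : ∃ s, s ≤ t0 ∧ 0 ≤ y s
    · have hSne : Set.Nonempty {s : ℝ | s ≤ t0 ∧ 0 ≤ y s} := hS
      have hSbdd : BddAbove {s : ℝ | s ≤ t0 ∧ 0 ≤ y s} := ⟨t0, fun s hs => hs.1⟩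
      have hs1le : sSup {s : ℝ | s ≤ t0 ∧ 0 ≤ y s} ≤ t0 :=
        csSup_le hSne (fun s hs => hs.1)
      have hys1 : 0 ≤ y (sSup {s : ℝ | s ≤ t0 ∧ 0 ≤ y s}) := by
        have hcl := csSup_mem_closure hSne hSbdd
        have hsub : closure {s : ℝ | s ≤ t0 ∧ 0 ≤ y s} ⊆ {s : ℝ | 0 ≤ y s} := by
          apply closure_minimal (fun s hs => hs.2)
          exact isClosed_le continuous_const hdy.continuous
        exact hsub hcl
      have hs1lt : sSup {s : ℝ | s ≤ t0 ∧ 0 ≤ y s} < t0 := by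
        rcases lt_or_eq_of_le hs1le with h | h
        · exact h
        · rw [h] at hys1; linarith
      have hneg : ∀ s ∈ Set.Ioo (sSup {s : ℝ | s ≤ t0 ∧ 0 ≤ y s}) t0, y s < 0 := by
        intro s hs
        by_contra hge
        push_neg at hge
        have hmem : s ∈ {s : ℝ | s ≤ t0 ∧ 0 ≤ y s} := ⟨hs.2.le, hge⟩
        have := le_csSup hSbdd hmem
        linarith [hs.1]
      have hmono : StrictMonoOn y (Set.Icc (sSup {s : ℝ | s ≤ t0 ∧ 0 ≤ y s}) t0) := by
        apply strictMonoOn_of_deriv_pos (convex_Icc _ _) hdy.continuous.continuousOn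
        intro s hs
        rw [interior_Icc] at hs
        exact hy'pos s (hneg s hs)
      have := hmono (Set.left_mem_Icc.mpr hs1lt.le) (Set.right_mem_Icc.mpr hs1lt.le) hs1lt
      linarith
    · push_neg at hS
      have hmono : StrictMonoOn y (Set.Iic t0) := by
        apply strictMonoOn_of_deriv_pos (convex_Iic _) hdy.continuous.continuousOn
        intro s hs
        rw [interior_Iic] at hs
        exact hy'pos s (hS s (le_of_lt hs))
      have hev : ∀ᶠ s in Filter.atBot, y s ≤ y (t0 - 1) := by
        filter_upwards [Filter.eventually_le_atBot (t0 - 1)] with s hs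
        rcases eq_or_lt_of_le hs with h | hlt
        · rw [h]
        · exact (hmono (Set.mem_Iic.mpr (by linarith))
            (Set.mem_Iic.mpr (by linarith)) hlt).le
      have h0le : (0:ℝ) ≤ y (t0 - 1) := le_of_tendsto hylim hev
      have := hS (t0 - 1) (by linarith)
      linarith
  -- the Lyapunov function L = y + k x, with k = 1 + m - 4mρ
  have hdL : Differentiable ℝ (fun t => y t + (1 + m - 4 * m * ρ) * x t) :=
    hdy.add (hdx.const_mul _)
  have hLd : ∀ t, deriv (fun t => y t + (1 + m - 4 * m * ρ) * x t) t
      = (m - 1) * (1 - 2 * m * ρ) * (1 - x t ^ 2) := by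
    intro t
    have h1 : deriv (fun t => y t + (1 + m - 4 * m * ρ) * x t) t
        = deriv y t + (1 + m - 4 * m * ρ) * deriv x t := by
      rw [deriv_fun_add (hdy t) ((hdx t).const_mul _), deriv_const_mul _ (hdx t)]
    have h2 : (1 - 2 * m * ρ) * (deriv y t + (1 + m - 4 * m * ρ) * deriv x t)
        = (1 - 2 * m * ρ) * ((m - 1) * (1 - 2 * m * ρ) * (1 - x t ^ 2)) := by
      have ex := hx' t
      have ey := hy' t
      linear_combination ey + (1 + m - 4 * m * ρ) * ex
    rw [h1]
    exact mul_left_cancel₀ (ne_of_lt hN) h2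
  -- x is strictly decreasing
  have hxanti : StrictAnti x := strictAnti_of_deriv_neg hxd
  have hδpos : 0 < 1 - x 0 ^ 2 := h1x2 0
  have hmn : (m - 1) * (1 - 2 * m * ρ) < 0 := mul_neg_of_pos_of_neg (by linarith) hN
  have hcpos : 0 < -((m - 1) * (1 - 2 * m * ρ) * (1 - x 0 ^ 2)) := by
    nlinarith
  -- deriv L ≤ -c on [0,∞)
  have hLd' : ∀ t, 0 ≤ t → deriv (fun t => y t + (1 + m - 4 * m * ρ) * x t) t
      ≤ -(-((m - 1) * (1 - 2 * m * ρ) * (1 - x 0 ^ 2))) := by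
    intro t ht
    rw [hLd t]
    rcases eq_or_lt_of_le ht with h | htpos
    · rw [← h]; linarith
    · have hxle : x t < x 0 := hxanti htpos
      have hsq : x t ^ 2 < x 0 ^ 2 := by nlinarith [hxpos t]
      nlinarith
  -- hence L(T) + c*T ≤ L(0) for T ≥ 0
  have hg : ∀ T, 0 ≤ T → y T + (1 + m - 4 * m * ρ) * x T
      + -((m - 1) * (1 - 2 * m * ρ) * (1 - x 0 ^ 2)) * T
      ≤ y 0 + (1 + m - 4 * m * ρ) * x 0 := by
    intro T hT
    have hdg : Differentiable ℝ (fun t => y t + (1 + m - 4 * m * ρ) * x t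
        + -((m - 1) * (1 - 2 * m * ρ) * (1 - x 0 ^ 2)) * t) :=
      hdL.add (differentiable_id.const_mul _)
    have hanti : AntitoneOn (fun t => y t + (1 + m - 4 * m * ρ) * x t
        + -((m - 1) * (1 - 2 * m * ρ) * (1 - x 0 ^ 2)) * t) (Set.Ici 0) := by
      apply antitoneOn_of_deriv_nonpos (convex_Ici _) hdg.continuous.continuousOn
        hdg.differentiableOn
      intro s hs
      rw [interior_Ici] at hs
      have hds : deriv (fun t => y t + (1 + m - 4 * m * ρ) * x t
          + -((m - 1) * (1 - 2 * m * ρ) * (1 - x 0 ^ 2)) * t) s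
          = deriv (fun t => y t + (1 + m - 4 * m * ρ) * x t) s
            + -((m - 1) * (1 - 2 * m * ρ) * (1 - x 0 ^ 2)) := by
        have h1 := (hdL s).hasDerivAt
        have h2 := (hasDerivAt_id s).const_mul
          (-((m - 1) * (1 - 2 * m * ρ) * (1 - x 0 ^ 2)))
        have h3 := (h1.add h2).deriv
        simpa [Pi.add_def] using h3
      rw [hds]
      have := hLd' s (le_of_lt hs)
      linarith
    have := hanti Set.self_mem_Ici (Set.mem_Ici.mpr hT) hT
    simpa using this
  -- contradiction for large T
  set c : ℝ := -((m - 1) * (1 - 2 * m * ρ) * (1 - x 0 ^ 2)) with hcdef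
  set T : ℝ := max 1 ((y 0 + (1 + m - 4 * m * ρ) * x 0 + 1) / c) with hTdef
  have hT0 : (0:ℝ) ≤ T := le_trans zero_le_one (le_max_left _ _)
  have hcT : y 0 + (1 + m - 4 * m * ρ) * x 0 + 1 ≤ c * T := by
    have h1 : (y 0 + (1 + m - 4 * m * ρ) * x 0 + 1) / c ≤ T := le_max_right _ _
    calc y 0 + (1 + m - 4 * m * ρ) * x 0 + 1
        = c * ((y 0 + (1 + m - 4 * m * ρ) * x 0 + 1) / c) := by
          field_simp
      _ ≤ c * T := mul_le_mul_of_nonneg_left h1 hcpos.le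
  have hfin := hg T hT0
  have hLTnn : 0 ≤ y T + (1 + m - 4 * m * ρ) * x T :=
    add_nonneg (hynn T) (mul_nonneg hkpos.le (hxpos T).le)
  nlinarith [hfin, hcT, hLTnn]
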